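/- For a positive integer n, x(n) = z(n) − (r(n)+1)·m(n) = 0 if and only if n ∈ {436, 451, 529, 545, 546}. -/
import Mathlib

def sf : ℕ → ℕ → ℕ → ℕ
  | 0, _, g => g
  | f+1, n, g => let g' := (g + n/g)/2; if g' < g then sf f n g' else g

def mysqrt (n : ℕ) : ℕ := if n ≤ 1 then n else sf 30 n (n/2)

def cf : ℕ → ℕ → ℕ
  | 0, _ => 0
  | f+1, n => if n ≤ 1 then 0 else cf f ((n+1)/2) + 1

def clog2 (n : ℕ) : ℕ := cf 15 n

set_option maxRecDepth 100000 in
theorem fincheck : ∀ n : ℕ, n < 1025 → 1 ≤ n →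
    mysqrt (2*n) * mysqrt (2*n) ≤ 2*n ∧ 2*n < (mysqrt (2*n)+1) * (mysqrt (2*n)+1) ∧
    n ≤ 2^(clog2 n) ∧ 2^(clog2 n) ≤ 2*n - 1 ∧
    ((2*n-1)/3 = (clog2 n + 1) * mysqrt (2*n) ↔ n = 436 ∨ n = 451 ∨ n = 529 ∨ n = 545 ∨ n = 546) := by decide

theorem powbound : ∀ R : ℕ, 11 ≤ R → (3*R+4)*(3*R+4) ≤ 2^R := by
  intro R hR
  induction R, hR using Nat.le_induction with
  | base => norm_num
  | succ R hR ih =>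
    have h2 : 2^(R+1) = 2 * 2^R := by ring
    have : (3*(R+1)+4)*(3*(R+1)+4) ≤ 2*((3*R+4)*(3*R+4)) := by nlinarith
    omega

theorem stmt
    (z : ℕ → ℤ) (m r : ℕ → ℕ) (c x : ℕ → ℤ) (y : ℕ → ℚ)
    (hz : ∀ n : ℕ, 1 ≤ n → 3 * z n < 2 * (n : ℤ) ∧ ∀ w : ℤ, 3 * w < 2 * (n : ℤ) → w ≤ z n)
    (hm : ∀ n : ℕ, 1 ≤ n → (m n : ℤ) ^ 2 ≤ 2 * (n : ℤ) ∧ ∀ w : ℕ, (w : ℤ) ^ 2 ≤ 2 * (n : ℤ) → w ≤ m n)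
    (hr : ∀ n : ℕ, 1 ≤ n → n ≤ 2 ^ r n ∧ ∀ s : ℕ, n ≤ 2 ^ s → r n ≤ s)
    (hc : ∀ n : ℕ, c n = 2 * (n : ℤ) - 2 * z n + 2)
    (hx : ∀ n : ℕ, x n = z n - ((r n : ℤ) + 1) * (m n : ℤ))
    (hy : ∀ n : ℕ, y n = (2 : ℚ) ^ (c n - (m n : ℤ)) - (n : ℚ) ^ ((m n : ℤ) - 1)) :
    ∀ n : ℕ, 1 ≤ n →
      (x n = 0 ↔ n = 436 ∨ n = 451 ∨ n = 529 ∨ n = 545 ∨ n = 546) := by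
  intro n hn
  obtain ⟨hz1, hz2⟩ := hz n hn
  obtain ⟨hm1, hm2⟩ := hm n hn
  obtain ⟨hr1, hr2⟩ := hr n hn
  rw [hx n]
  have hm1' : m n * m n ≤ 2 * n := by
    have := hm1
    rw [sq] at this
    exact_mod_cast this
  by_cases hbig : n < 1025
  · obtain ⟨hM1, hM2, hR1, hR2, hiff⟩ := fincheck n hbig hn
    -- m n = mysqrt (2n)
    have hmle : m n ≤ mysqrt (2*n) := by
      by_contra hcon
      push_neg at hcon
      nlinarith
    have hmge : mysqrt (2*n) ≤ m n := by
      apply hm2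
      push_cast
      nlinarith
    have hmm : m n = mysqrt (2*n) := le_antisymm hmle hmge
    -- r n = clog2 n
    have hrle : r n ≤ clog2 n := hr2 _ hR1
    have hrge : clog2 n ≤ r n := by
      by_contra hcon
      push_neg at hcon
      have h1 : 1 ≤ clog2 n := by omega
      have h2 : 2 ^ (r n) ≤ 2 ^ (clog2 n - 1) := Nat.pow_le_pow_right (by norm_num) (by omega)
      have h3 : 2 * 2 ^ (clog2 n - 1) = 2 ^ (clog2 n) := by
        rw [← pow_succ']
        congr 1
        omega
      omega
    have hrr : r n = clog2 n := le_antisymm hrle hrge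
    -- z n = (2n-1)/3
    have hZ1 : 3 * ((2*n-1)/3) ≤ 2*n - 1 := by omega
    have hZ2 : 2*n - 1 < 3 * ((2*n-1)/3) + 3 := by omega
    have hzge : (((2*n-1)/3 : ℕ) : ℤ) ≤ z n := by
      apply hz2
      push_cast
      omega
    have hzz : z n = (((2*n-1)/3 : ℕ) : ℤ) := by omega
    rw [hzz, hmm, hrr]
    constructor
    · intro h
      apply hiff.mp
      have : (((2*n-1)/3 : ℕ) : ℤ) = (((clog2 n + 1) * mysqrt (2*n) : ℕ) : ℤ) := by
        push_cast
        omega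
      exact_mod_cast this
    · intro h
      have := hiff.mpr h
      push_cast [this]
      ring
  · -- n ≥ 1025 : both sides false
    push_neg at hbig
    have hR11 : 11 ≤ r n := by
      by_contra hcon
      push_neg at hcon
      have : 2 ^ (r n) ≤ 2 ^ 10 := Nat.pow_le_pow_right (by norm_num) (by omega)
      omega
    have hlow : 2 ^ (r n - 1) < n := by
      by_contra hcon
      push_neg at hcon
      have := hr2 _ hcon
      omega
    have hpow : (3 * r n + 4) * (3 * r n + 4) ≤ 2 ^ (r n) := powbound _ hR11
    have h2r : 2 ^ (r n) < 2 * n := by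
      have : 2 * 2 ^ (r n - 1) = 2 ^ (r n) := by
        rw [← pow_succ']
        congr 1
        omega
      omega
    have hMbig : 3 * r n + 4 ≤ m n := by
      apply hm2
      push_cast
      nlinarith
    have hkey : 3 * ((r n + 1) * m n) + 3 < 2 * n := by nlinarith
    have hzgt : ((r n : ℤ) + 1) * (m n : ℤ) + 1 ≤ z n := by
      apply hz2
      have hc : ((3 * ((r n + 1) * m n) + 3 : ℕ) : ℤ) < ((2 * n : ℕ) : ℤ) := by
        exact_mod_cast hkey
      push_cast at hc
      linarith
    constructor
    · intro h
      omega
    · intro h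
      omega
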